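/- Let n = 2m with m odd and let p be a prime divisor of m. If c ∈ ℚ is such that A_n(c) is a square in ℚ, then A_p(c) is a square in ℚ or -A_p(c) is a square in ℚ; moreover A_2(c) = c(c+1) is a square in ℚ. Here A_1(c) = c and A_{k+1}(c) = A_k(c)^2 + c. -/
import Mathlib

/-- Integer numerator sequence: `Bseq a b k` is the numerator of `A (k+1) (a/b)`
over the denominator `b ^ (2 ^ k)`. -/
def Bseq (a b : ℤ) : ℕ → ℤ
  | 0 => a
  | k + 1 => (Bseq a b k) ^ 2 + a * b ^ (2 ^ (k + 1) - 1)

lemma Bseq_coprime (a b : ℤ) (h : IsCoprime b a) : ∀ k, IsCoprime b (Bseq a b k) := by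
  intro k
  induction k with
  | zero => exact h
  | succ k ih =>
      have h2 : 2 ^ (k + 1) - 1 = (2 ^ (k + 1) - 2) + 1 := by
        have : 2 ≤ 2 ^ (k + 1) := Nat.one_lt_two_pow (by omega)
        omega
      have : Bseq a b (k + 1) = (Bseq a b k) ^ 2 + b * (a * b ^ (2 ^ (k + 1) - 2)) := by
        show (Bseq a b k) ^ 2 + a * b ^ (2 ^ (k + 1) - 1) = _
        rw [h2]; ring
      rw [this]
      exact (ih.pow_right).add_mul_left_right _

lemma Bseq_shift (a b : ℤ) (t : ℕ) :
    ∀ j : ℕ, ∃ M : ℤ, Bseq a b (t + j + 1) =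
      b ^ (2 ^ (t + j + 1) - 2 ^ j) * Bseq a b j + (Bseq a b t) ^ 2 * M := by
  intro j
  induction j with
  | zero =>
      refine ⟨1, ?_⟩
      show (Bseq a b t) ^ 2 + a * b ^ (2 ^ (t + 1) - 1) = _
      simp [Bseq]; ring
  | succ j ih =>
      obtain ⟨M, hM⟩ := ih
      refine ⟨2 * b ^ (2 ^ (t + j + 1) - 2 ^ j) * Bseq a b j * M + (Bseq a b t) ^ 2 * M ^ 2, ?_⟩
      have hle : 2 ^ j ≤ 2 ^ (t + j + 1) := Nat.pow_le_pow_right (by norm_num) (by omega)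
      have hle2 : 1 ≤ 2 ^ (j + 1) := Nat.one_le_two_pow
      have e1 : 2 ^ (t + j + 1 + 1) - 2 ^ (j + 1) = (2 ^ (t + j + 1) - 2 ^ j) + (2 ^ (t + j + 1) - 2 ^ j) := by
        have h1 : 2 ^ (t + j + 1 + 1) = 2 * 2 ^ (t + j + 1) := by ring
        have h2 : 2 ^ (j + 1) = 2 * 2 ^ j := by ring
        omega
      have e2 : 2 ^ (t + j + 1 + 1) - 1 = ((2 ^ (t + j + 1) - 2 ^ j) + (2 ^ (t + j + 1) - 2 ^ j)) + (2 ^ (j + 1) - 1) := by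
        have h1 : 2 ^ (t + j + 1 + 1) = 2 * 2 ^ (t + j + 1) := by ring
        have h2 : 2 ^ (j + 1) = 2 * 2 ^ j := by ring
        omega
      have lhs : Bseq a b (t + (j + 1) + 1) =
          (Bseq a b (t + j + 1)) ^ 2 + a * b ^ (2 ^ (t + (j + 1) + 1) - 1) := rfl
      have rhsB : Bseq a b (j + 1) = (Bseq a b j) ^ 2 + a * b ^ (2 ^ (j + 1) - 1) := rfl
      rw [lhs, hM, rhsB]
      have : t + (j + 1) + 1 = t + j + 1 + 1 := by omega
      rw [this, e1, e2]
      ring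

lemma Bseq_dvd (a b : ℤ) (j : ℕ) :
    ∀ k : ℕ, ∃ W M : ℤ, ∃ e : ℕ, Bseq a b ((j + 1) * (k + 1) - 1) = Bseq a b j * W ∧
      W = b ^ e + Bseq a b j * M := by
  intro k
  induction k with
  | zero =>
      refine ⟨1, 0, 0, ?_, by ring⟩
      have : (j + 1) * (0 + 1) - 1 = j := by omega
      rw [this]; ring
  | succ k ih =>
      obtain ⟨W, M, e, hW, hWe⟩ := ih
      set t := (j + 1) * (k + 1) - 1 with ht
      obtain ⟨M3, hM3⟩ := Bseq_shift a b t j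
      have hidx : (j + 1) * (k + 1 + 1) - 1 = t + j + 1 := by
        have : 1 ≤ (j + 1) * (k + 1) := Nat.one_le_iff_ne_zero.mpr (by positivity)
        rw [ht]; ring_nf; omega
      refine ⟨b ^ (2 ^ (t + j + 1) - 2 ^ j) + Bseq a b j * (W ^ 2 * M3),
        W ^ 2 * M3, 2 ^ (t + j + 1) - 2 ^ j, ?_, rfl⟩
      rw [hidx, hM3, hW]
      ring

lemma int_isSquare_of_rat {N : ℤ} (h : IsSquare ((N : ℚ))) : IsSquare N := by
  obtain ⟨r, hr⟩ := h
  have hden : r.den * r.den = 1 := by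
    have h1 : (r * r).den = r.den * r.den := Rat.mul_self_den r
    rw [← hr] at h1
    simpa using h1.symm
  have hd1 : r.den = 1 := by
    nlinarith [r.pos, hden]
  have hr2 : ((r.num : ℚ)) = r := Rat.coe_int_num_of_den_eq_one hd1
  refine ⟨r.num, ?_⟩
  have : ((N : ℚ)) = ((r.num * r.num : ℤ) : ℚ) := by push_cast [hr2]; rw [hr]
  exact_mod_cast this

theorem stmt_8 (A : ℕ → ℚ → ℚ)
    (hA1 : ∀ c, A 1 c = c)
    (hArec : ∀ n ≥ 1, ∀ c, A (n + 1) c = (A n c) ^ 2 + c)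
    (n m p : ℕ) (hn : n = 2 * m) (hm : Odd m) (hp : p.Prime) (hpm : p ∣ m)
    (c : ℚ) (hsq : IsSquare (A n c)) :
    (IsSquare (A p c) ∨ IsSquare (-(A p c))) ∧ IsSquare (c * (c + 1)) := by
  set a : ℤ := c.num with ha
  set b : ℤ := (c.den : ℤ) with hb
  have hb0 : (0 : ℤ) < b := by rw [hb]; exact_mod_cast c.pos
  have hbq0 : ((b : ℚ)) ≠ 0 := by positivity
  have hcop : IsCoprime b a := by
    rw [Int.isCoprime_iff_gcd_eq_one]
    simpa [Int.gcd, ha, hb, Nat.coprime_comm] using c.reduced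
  -- p is odd and ≥ 3, m ≥ 3
  have hp2 : p ≠ 2 := by
    rintro rfl
    exact (Nat.not_even_iff_odd.mpr hm) ((even_iff_two_dvd).mpr hpm)
  have hpodd : Odd p := hp.odd_of_ne_two hp2
  have hp3 : 3 ≤ p := by
    have := hp.two_le
    omega
  have hm0 : m ≠ 0 := by rintro rfl; exact (by norm_num : ¬ Odd 0) hm
  have hm3 : 3 ≤ m := le_trans hp3 (Nat.le_of_dvd (Nat.pos_of_ne_zero hm0) hpm)
  have hca : (c : ℚ) * (b : ℚ) = (a : ℚ) := by
    rw [ha, hb]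
    exact_mod_cast Rat.mul_den_eq_num c
  -- numerator translation
  have Q1 : ∀ k : ℕ, ((Bseq a b k : ℚ)) = A (k + 1) c * (b : ℚ) ^ (2 ^ k) := by
    intro k
    induction k with
    | zero =>
        show ((a : ℚ)) = A 1 c * (b : ℚ) ^ (2 ^ 0)
        rw [hA1, pow_zero, pow_one, hca]
    | succ k ih =>
        have hrec := hArec (k + 1) (by omega) c
        have hcast : (Bseq a b (k + 1) : ℚ)
            = (Bseq a b k : ℚ) ^ 2 + (a : ℚ) * (b : ℚ) ^ (2 ^ (k + 1) - 1) := by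
          show (((Bseq a b k) ^ 2 + a * b ^ (2 ^ (k + 1) - 1) : ℤ) : ℚ) = _
          push_cast
          ring
        have h1 : ((b : ℚ)) ^ (2 ^ (k + 1)) = (b : ℚ) ^ (2 ^ k) * (b : ℚ) ^ (2 ^ k) := by
          rw [← pow_add]
          congr 1
          have : 2 ^ (k + 1) = 2 * 2 ^ k := by ring
          omega
        have h2 : ((b : ℚ)) ^ (2 ^ (k + 1)) = (b : ℚ) ^ (2 ^ (k + 1) - 1) * (b : ℚ) := by
          rw [← pow_succ]
          congr 1
          have : 1 ≤ 2 ^ (k + 1) := Nat.one_le_two_pow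
          omega
        rw [hcast, ih, hrec]
        linear_combination (-(A (k + 1) c ^ 2)) * h1 + (-c) * h2
          + (-((b : ℚ)) ^ (2 ^ (k + 1) - 1)) * hca
  set K : ℕ := 2 * m - 1 with hKdef
  have hKn : K + 1 = n := by omega
  -- A n c ≥ 0 and c*(c+1) ≥ 0
  have hA2 : A 2 c = c ^ 2 + c := by
    have := hArec 1 (le_refl 1) c
    rwa [hA1] at this
  have hAn_nonneg : 0 ≤ A n c := by
    obtain ⟨r, hr⟩ := hsq
    rw [hr]
    exact mul_self_nonneg r
  have hA2_nonneg : 0 ≤ A 2 c := by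
    by_contra hneg
    push_neg at hneg
    rw [hA2] at hneg
    have hc1 : -1 < c := by nlinarith
    have hc0 : c < 0 := by nlinarith
    have negAll : ∀ k, c ≤ A (k + 1) c ∧ A (k + 1) c < 0 := by
      intro k
      induction k with
      | zero => rw [hA1]; exact ⟨le_refl c, hc0⟩
      | succ k ih =>
          rw [hArec (k + 1) (by omega) c]
          constructor
          · nlinarith [ih.1, ih.2]
          · nlinarith [ih.1, ih.2]
    have := (negAll K).2
    rw [hKn] at this
    linarith
  -- the numerator of A n c is a perfect square
  have hsqB : IsSquare (Bseq a b K) := by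
    apply int_isSquare_of_rat
    have h1 := Q1 K
    rw [hKn] at h1
    have hexp : 2 ^ K = 2 ^ (K - 1) * 2 := by
      have h3 : K = (K - 1) + 1 := by omega
      conv_lhs => rw [h3, pow_succ]
    rw [h1, hexp, pow_mul]
    exact hsq.mul ⟨(b : ℚ) ^ (2 ^ (K - 1)), by rw [sq]⟩
  obtain ⟨t, ht⟩ := hsqB
  -- coprime factorization argument
  have main : ∀ j : ℕ, (j + 1) ∣ 2 * m → ∃ s : ℤ, Bseq a b j = s ^ 2 ∨ Bseq a b j = -s ^ 2 := by
    intro j hj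
    obtain ⟨k, hk⟩ := hj
    have hk0 : k ≠ 0 := by rintro rfl; omega
    obtain ⟨W, M, e, hW, hWe⟩ := Bseq_dvd a b j (k - 1)
    have hidx : (j + 1) * (k - 1 + 1) - 1 = K := by
      have : k - 1 + 1 = k := by omega
      rw [this]; omega
    rw [hidx] at hW
    have hcopW : IsCoprime (Bseq a b j) W := by
      rw [hWe]
      exact ((Bseq_coprime a b hcop j).symm.pow_right).add_mul_left_right _
    exact Int.sq_of_isCoprime (c := t) hcopW (by rw [← hW, ht, sq])
  -- the p part
  obtain ⟨s, hs⟩ := main (p - 1) (by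
    have : p - 1 + 1 = p := by omega
    rw [this]
    exact Dvd.dvd.mul_left hpm 2)
  have hQp := Q1 (p - 1)
  have hp1 : p - 1 + 1 = p := by omega
  rw [hp1] at hQp
  have hexp2 : 2 ^ (p - 1) = 2 ^ (p - 2) * 2 := by
    have h3 : p - 1 = (p - 2) + 1 := by omega
    conv_lhs => rw [h3, pow_succ]
  have hbE : ((b : ℚ)) ^ (2 ^ (p - 2)) ≠ 0 := by positivity
  have hleft : IsSquare (A p c) ∨ IsSquare (-(A p c)) := by
    rcases hs with hs | hs
    · left
      refine ⟨(s : ℚ) / (b : ℚ) ^ (2 ^ (p - 2)), ?_⟩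
      have : ((Bseq a b (p - 1) : ℤ) : ℚ) = ((s ^ 2 : ℤ) : ℚ) := by exact_mod_cast hs
      rw [hQp, hexp2, pow_mul] at this
      push_cast at this
      field_simp
      linear_combination this
    · right
      refine ⟨(s : ℚ) / (b : ℚ) ^ (2 ^ (p - 2)), ?_⟩
      have : ((Bseq a b (p - 1) : ℤ) : ℚ) = ((-s ^ 2 : ℤ) : ℚ) := by exact_mod_cast hs
      rw [hQp, hexp2, pow_mul] at this
      push_cast at this
      field_simp
      linear_combination -this
  -- the c*(c+1) part
  obtain ⟨s2, hs2⟩ := main 1 ⟨m, rfl⟩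
  have hQ2 := Q1 1
  have hB1_nonneg : (0 : ℤ) ≤ Bseq a b 1 := by
    have : (0 : ℚ) ≤ ((Bseq a b 1 : ℤ) : ℚ) := by
      rw [hQ2]
      positivity
    exact_mod_cast this
  have hs2' : Bseq a b 1 = s2 ^ 2 := by
    rcases hs2 with hs2 | hs2
    · exact hs2
    · have hz : s2 = 0 := by nlinarith [hB1_nonneg, hs2]
      rw [hs2, hz]; ring
  have hright : IsSquare (c * (c + 1)) := by
    refine ⟨(s2 : ℚ) / (b : ℚ), ?_⟩
    have hcast : ((Bseq a b 1 : ℤ) : ℚ) = ((s2 ^ 2 : ℤ) : ℚ) := by exact_mod_cast hs2'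
    rw [hQ2, hA2] at hcast
    push_cast at hcast
    have hbne : ((b : ℚ)) ≠ 0 := hbq0
    field_simp
    linear_combination hcast
  exact ⟨hleft, hright⟩
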